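/- If S is a winning set for duplication-allowed simplified infinite Mastermind over a countably infinite color set, then S together with, for each s ∈ S, a word s̄ that disagrees with s at every position, forms an eventually different family: every w : ℕ → ℕ is eventually different from some member of S ∪ {s̄ : s ∈ S}. Consequently 𝔡(≠*) ≤ 𝕞ₛ*. -/

import Mathlib

/-- `D` is an eventually different family: every function agrees with some
member of `D` at only finitely many positions. -/
def IsEDFamily (D : Set (ℕ → ℕ)) : Prop :=
  ∀ w : ℕ → ℕ, ∃ s ∈ D, {n : ℕ | s n = w n}.Finite

/-- The simplified Mastermind feedback of the guess `s` against the codeword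
`w`: the correctness and incorrectness counts, as cardinals in `ℕ ∪ {ω}`. -/
def simpFeedback (s w : ℕ → ℕ) : Cardinal × Cardinal :=
  (Cardinal.mk {n : ℕ | s n = w n}, Cardinal.mk {n : ℕ | s n ≠ w n})

/-- `S` is a winning set for duplication-allowed simplified infinite
Mastermind: the simplified feedback on `S` determines the codeword. -/
def IsWinningSimp (S : Set (ℕ → ℕ)) : Prop :=
  ∀ w w' : ℕ → ℕ, (∀ s ∈ S, simpFeedback s w = simpFeedback s w') → w = w'

lemma mk_eq_aleph0_of_infinite {A : Set ℕ} (hA : A.Infinite) :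
    Cardinal.mk A = Cardinal.aleph0 := by
  haveI := hA.to_subtype
  exact le_antisymm Cardinal.mk_le_aleph0 (Cardinal.aleph0_le_mk _)

lemma ed_main (S : Set (ℕ → ℕ)) (hS : IsWinningSimp S) (sb : (ℕ → ℕ) → (ℕ → ℕ))
    (hsb : ∀ s ∈ S, ∀ n : ℕ, sb s n ≠ s n) : IsEDFamily (S ∪ sb '' S) := by
  intro w
  by_contra h
  push_neg at h
  replace h : ∀ s ∈ S ∪ sb '' S, {n : ℕ | s n = w n}.Infinite := h
  set w' : ℕ → ℕ := Function.update w 0 (w 0 + 1) with hw'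
  have hfb : ∀ s ∈ S, simpFeedback s w = simpFeedback s w' := by
    intro s hs
    have hA : {n : ℕ | s n = w n}.Infinite := h s (Or.inl hs)
    have hB : {n : ℕ | sb s n = w n}.Infinite := h (sb s) (Or.inr ⟨s, hs, rfl⟩)
    have hDis : {n : ℕ | s n ≠ w n}.Infinite := by
      refine hB.mono ?_
      intro n hn hc
      exact hsb s hs n (hn.trans hc.symm)
    have hupd : ∀ n ≠ 0, w' n = w n := fun n hn => Function.update_of_ne hn _ _
    have hA' : {n : ℕ | s n = w' n}.Infinite := by
      refine (hA.diff (Set.finite_singleton 0)).mono ?_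
      rintro n ⟨hn, hn0⟩
      simpa [hupd n hn0] using hn
    have hDis' : {n : ℕ | s n ≠ w' n}.Infinite := by
      refine (hDis.diff (Set.finite_singleton 0)).mono ?_
      rintro n ⟨hn, hn0⟩
      simpa [hupd n hn0] using hn
    unfold simpFeedback
    rw [mk_eq_aleph0_of_infinite hA, mk_eq_aleph0_of_infinite hA',
      mk_eq_aleph0_of_infinite hDis, mk_eq_aleph0_of_infinite hDis']
  have := hS w w' hfb
  have : w 0 = w' 0 := by rw [this]
  simp [hw', Function.update_self] at this

lemma not_ed_of_finite {D : Set (ℕ → ℕ)} (hD : D.Finite) : ¬ IsEDFamily D := by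
  intro hED
  rcases D.eq_empty_or_nonempty with rfl | hne
  · obtain ⟨s, hs, -⟩ := hED 0
    exact hs
  · set L := hD.toFinset.toList with hL
    have hlen : 0 < L.length := by
      rw [hL, Finset.length_toList]
      exact Finset.card_pos.mpr (hD.toFinset_nonempty.mpr hne)
    set w : ℕ → ℕ := fun n => L.get ⟨n % L.length, Nat.mod_lt _ hlen⟩ n with hw
    obtain ⟨s, hs, hfin⟩ := hED w
    have hsL : s ∈ L := by simp [hL, hD.mem_toFinset, hs]
    obtain ⟨i, hilt, hget⟩ := List.getElem_of_mem hsL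
    have : {n : ℕ | s n = w n}.Infinite := by
      refine Set.infinite_of_injective_forall_mem
        (f := fun k : ℕ => i + k * L.length) ?_ ?_
      · intro a b hab
        exact Nat.eq_of_mul_eq_mul_right hlen (Nat.add_left_cancel hab)
      · intro k
        have hmod : (i + k * L.length) % L.length = i := by
          simp [Nat.add_mul_mod_self_right, Nat.mod_eq_of_lt hilt]
        show s (i + k * L.length) = w (i + k * L.length)
        rw [hw]
        simp only [List.get_eq_getElem, hmod]
        rw [hget]
    exact this hfin

lemma winning_univ : IsWinningSimp (Set.univ) := by
  intro w w' hfb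
  have := hfb w (Set.mem_univ w)
  unfold simpFeedback at this
  have h2 := congrArg Prod.snd this
  simp only at h2
  have : {n : ℕ | w n ≠ w' n} = ∅ := by
    by_contra hne
    rw [← Ne, ← Set.nonempty_iff_ne_empty] at hne
    have : Cardinal.mk {n : ℕ | w n ≠ w' n} ≠ 0 := by
      rw [Cardinal.mk_ne_zero_iff]
      exact ⟨⟨hne.choose, hne.choose_spec⟩⟩
    apply this
    rw [← h2]
    simp
  funext n
  by_contra hn
  exact absurd (this ▸ hn : n ∈ (∅ : Set ℕ)) (by simp)

/-- If `S` is winning for duplication-allowed simplified infinite Mastermind,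
and for each `s ∈ S` the word `sb s` disagrees with `s` everywhere, then
`S ∪ sb '' S` is an eventually different family. Consequently the eventually
different number `𝔡(≠*)` is at most the simplified mastermind number `𝕞ₛ*`. -/
theorem ed_family_of_winning_simplified (S : Set (ℕ → ℕ))
    (hS : IsWinningSimp S) (sb : (ℕ → ℕ) → (ℕ → ℕ))
    (hsb : ∀ s ∈ S, ∀ n : ℕ, sb s n ≠ s n) :
    IsEDFamily (S ∪ sb '' S) ∧
      sInf {c : Cardinal | ∃ D : Set (ℕ → ℕ), IsEDFamily D ∧ Cardinal.mk D = c}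
        ≤ sInf {c : Cardinal |
            ∃ T : Set (ℕ → ℕ), IsWinningSimp T ∧ Cardinal.mk T = c} := by
  refine ⟨ed_main S hS sb hsb, ?_⟩
  apply le_csInf
  · exact ⟨Cardinal.mk (Set.univ : Set (ℕ → ℕ)), Set.univ, winning_univ, rfl⟩
  · rintro c ⟨T, hT, rfl⟩
    set sb' : (ℕ → ℕ) → (ℕ → ℕ) := fun s n => s n + 1 with hsb'
    have hsb'' : ∀ s ∈ T, ∀ n, sb' s n ≠ s n := fun s _ n => Nat.succ_ne_self _
    have hED : IsEDFamily (T ∪ sb' '' T) := ed_main T hT sb' hsb''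
    have hTinf : T.Infinite := by
      by_contra hfin
      rw [Set.not_infinite] at hfin
      exact not_ed_of_finite (hfin.union (hfin.image _)) hED
    have hale : Cardinal.aleph0 ≤ Cardinal.mk T := by
      haveI := hTinf.to_subtype
      exact Cardinal.infinite_iff.mp inferInstance
    have hmk : Cardinal.mk ↥(T ∪ sb' '' T) ≤ Cardinal.mk T := by
      calc Cardinal.mk ↥(T ∪ sb' '' T)
          ≤ Cardinal.mk T + Cardinal.mk ↥(sb' '' T) := Cardinal.mk_union_le _ _
        _ ≤ Cardinal.mk T + Cardinal.mk T := add_le_add le_rfl (Cardinal.mk_image_le)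
        _ = Cardinal.mk T := Cardinal.add_eq_self hale
    exact csInf_le_of_le (OrderBot.bddBelow _) ⟨_, hED, rfl⟩ hmk
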